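/- arXiv:1709.00969 — 2 statements merged into one kernel-verified Lean document; each statement's English description precedes it below -/
import Mathlib

section
/- For all α, β > 0 the first moment of the Bessel distribution is ∫_{[0,∞)} x m_{α,β}(dx) = α/β. -/
open MeasureTheory Filter Set
open scoped ENNReal

/-- The modified Bessel function of the first kind of order one,
`I₁(r) = (r/2) Σ_{k=0}^∞ (r²/4)^k / (k!(k+1)!)`. -/
noncomputable def besselI1 (r : ℝ) : ℝ :=
  r / 2 * ∑' k : ℕ, (r ^ 2 / 4) ^ k / ((Nat.factorial k : ℝ) * (Nat.factorial (k + 1) : ℝ))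

/-- The Bessel distribution `m_{α,β}` on `[0,∞)`:
`m_{α,β}(dx) = e^{−α} δ₀(dx) + β e^{−α−βx} √(α/(βx)) I₁(2√(αβx)) dx`. -/
noncomputable def besselMeasure (α β : ℝ) : Measure ℝ :=
  ENNReal.ofReal (Real.exp (-α)) • Measure.dirac (0 : ℝ) +
    MeasureTheory.volume.withDensity fun x =>
      ENNReal.ofReal (Set.indicator (Set.Ioi (0 : ℝ))
        (fun x => β * Real.exp (-α - β * x) * Real.sqrt (α / (β * x)) *
          besselI1 (2 * Real.sqrt (α * β * x))) x)


lemma bessel_summable (t : ℝ) :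
    Summable fun k : ℕ => t ^ k / ((Nat.factorial k : ℝ) * (Nat.factorial (k + 1) : ℝ)) := by
  apply Summable.of_abs
  apply Summable.of_nonneg_of_le (fun k => abs_nonneg _)
    (fun k => ?_) (Real.summable_pow_div_factorial |t|)
  rw [abs_div, abs_pow]
  apply div_le_div_of_nonneg_left (by positivity) (by positivity)
  rw [abs_of_nonneg (by positivity)]
  have h1 : (1 : ℝ) ≤ (Nat.factorial (k + 1) : ℝ) := by
    exact_mod_cast Nat.one_le_iff_ne_zero.2 (Nat.factorial_ne_zero _)
  have h2 : (0 : ℝ) < (Nat.factorial k : ℝ) := by positivity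
  nlinarith

lemma bessel_series_measurable :
    Measurable fun t : ℝ => ∑' k : ℕ, t ^ k / ((Nat.factorial k : ℝ) * (Nat.factorial (k + 1) : ℝ)) := by
  apply measurable_of_tendsto_metrizable
    (f := fun n t => ∑ k ∈ Finset.range n, t ^ k / ((Nat.factorial k : ℝ) * (Nat.factorial (k + 1) : ℝ)))
  · intro n
    exact Finset.measurable_sum _ fun k _ => (measurable_id.pow_const k).div_const _
  · rw [tendsto_pi_nhds]
    intro t
    exact (bessel_summable t).hasSum.tendsto_sum_nat

lemma besselI1_two_sqrt {t : ℝ} (ht : 0 ≤ t) :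
    besselI1 (2 * Real.sqrt t)
      = Real.sqrt t * ∑' k : ℕ, t ^ k / ((Nat.factorial k : ℝ) * (Nat.factorial (k + 1) : ℝ)) := by
  have h1 : (2 * Real.sqrt t) ^ 2 / 4 = t := by
    rw [mul_pow, Real.sq_sqrt ht]; ring
  rw [besselI1, h1]; ring

lemma besselI1_nonneg {r : ℝ} (hr : 0 ≤ r) : 0 ≤ besselI1 r := by
  apply mul_nonneg (by positivity)
  exact tsum_nonneg fun k => by positivity

lemma gamma_lintegral (k : ℕ) {β : ℝ} (hβ : 0 < β) :
    ∫⁻ x in Ioi (0:ℝ), ENNReal.ofReal (x ^ (k+1) * Real.exp (-(β * x)))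
      = ENNReal.ofReal ((Nat.factorial (k+1) : ℝ) / β ^ (k+2)) := by
  have hInt : IntegrableOn (fun x : ℝ => x ^ (k+1) * Real.exp (-(β * x))) (Ioi 0) := by
    have h := integrableOn_rpow_mul_exp_neg_mul_rpow (s := (k+1 : ℝ)) (p := 1)
      (by have := Nat.cast_nonneg (α:=ℝ) k; linarith) zero_lt_one hβ
    apply h.congr_fun ?_ measurableSet_Ioi
    intro x hx
    simp only [Real.rpow_one, neg_mul,
      show ((k : ℝ) + 1) = ((k+1 : ℕ) : ℝ) by push_cast; ring, Real.rpow_natCast]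
  rw [← ofReal_integral_eq_lintegral_ofReal hInt]
  · congr 1
    have h := Real.integral_rpow_mul_exp_neg_mul_Ioi (a := (k+2 : ℝ)) (by positivity) hβ
    have heq : ∀ t : ℝ, t ^ ((k+2 : ℝ) - 1) * Real.exp (-(β * t))
        = t ^ (k+1) * Real.exp (-(β * t)) := by
      intro t
      rw [show ((k:ℝ)+2) - 1 = ((k+1 : ℕ) : ℝ) by push_cast; ring, Real.rpow_natCast]
    simp_rw [heq] at h
    rw [h, show ((k:ℝ)+2) = ((k+2 : ℕ) : ℝ) by push_cast; ring, Real.rpow_natCast,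
      show ((k+2 : ℕ) : ℝ) = ((k+1 : ℕ) : ℝ) + 1 by push_cast; ring,
      Real.Gamma_nat_eq_factorial, div_pow, one_pow]
    ring
  · filter_upwards [ae_restrict_mem measurableSet_Ioi] with x hx
    have hx' : (0:ℝ) < x := hx
    positivity

lemma sum_pow_div_factorial (α : ℝ) :
    ∑' k : ℕ, α ^ k / (Nat.factorial k : ℝ) = Real.exp α := by
  rw [Real.exp_eq_exp_ℝ, NormedSpace.exp_eq_tsum_div]

lemma measurable_besselI1 : Measurable besselI1 := by
  unfold besselI1
  exact (measurable_id.div_const 2).mul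
    (bessel_series_measurable.comp ((measurable_id.pow_const 2).div_const 4))

theorem bessel_first_moment (α β : ℝ) (hα : 0 < α) (hβ : 0 < β) :
    ∫ x, x ∂ besselMeasure α β = α / β := by
  set g : ℝ → ℝ := fun x => β * Real.exp (-α - β * x) * Real.sqrt (α / (β * x)) *
      besselI1 (2 * Real.sqrt (α * β * x)) with hg
  have hg_nonneg : ∀ x, 0 ≤ g x := by
    intro x
    apply mul_nonneg (mul_nonneg (mul_nonneg hβ.le (Real.exp_pos _).le) (Real.sqrt_nonneg _))
    exact besselI1_nonneg (by positivity)
  have hgmeas : Measurable g := by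
    apply Measurable.mul
    · exact ((measurable_const.mul ((measurable_const.sub
        (measurable_const.mul measurable_id)).exp)).mul
        ((measurable_const.div (measurable_const.mul measurable_id)).sqrt))
    · exact measurable_besselI1.comp
        (measurable_const.mul ((measurable_const.mul measurable_id).sqrt))
  have hhmeas : Measurable ((Ioi (0:ℝ)).indicator g) := hgmeas.indicator measurableSet_Ioi
  have hdens : Measurable fun x => ENNReal.ofReal ((Ioi (0:ℝ)).indicator g x) :=
    hhmeas.ennreal_ofReal
  -- the measure of negative reals is zero
  have h_ae : 0 ≤ᵐ[besselMeasure α β] fun x : ℝ => x := by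
    rw [EventuallyLE, ae_iff]
    simp only [Pi.zero_apply]
    have hset : {x : ℝ | ¬ (0:ℝ) ≤ x} = Iio 0 := by
      ext x; simp [not_le]
    rw [hset, besselMeasure]
    rw [Measure.add_apply, Measure.smul_apply, Measure.dirac_apply' _ measurableSet_Iio,
      withDensity_apply _ measurableSet_Iio]
    have h2 : ∫⁻ x in Iio (0:ℝ),
        ENNReal.ofReal ((Ioi (0:ℝ)).indicator g x) ∂volume = 0 := by
      rw [setLIntegral_congr_fun measurableSet_Iio
        (fun x (hx : x ∈ Iio (0:ℝ)) => ?_), lintegral_zero]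
      have : x ∉ Ioi (0:ℝ) := by simp at hx ⊢; linarith
      simp [indicator_of_notMem this]
    rw [← hg, h2]
    rw [indicator_of_notMem (by simp : (0:ℝ) ∉ Iio (0:ℝ))]
    simp
  rw [integral_eq_lintegral_of_nonneg_ae h_ae measurable_id.aestronglyMeasurable]
  -- compute the lintegral
  have hL : ∫⁻ x, ENNReal.ofReal x ∂ besselMeasure α β = ENNReal.ofReal (α / β) := by
    rw [besselMeasure, lintegral_add_measure, lintegral_smul_measure,
      lintegral_dirac, ENNReal.ofReal_zero, smul_zero, zero_add,
      lintegral_withDensity_eq_lintegral_mul volume hdens ENNReal.measurable_ofReal]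
    have hpt : ∀ x : ℝ, ((fun x => ENNReal.ofReal ((Ioi (0:ℝ)).indicator g x)) *
        fun a => ENNReal.ofReal a) x
        = (Ioi (0:ℝ)).indicator (fun x => ENNReal.ofReal (g x * x)) x := by
      intro x
      by_cases hx : x ∈ Ioi (0:ℝ)
      · simp only [Pi.mul_apply, indicator_of_mem hx,
          ENNReal.ofReal_mul (hg_nonneg x)]
      · simp [Pi.mul_apply, indicator_of_notMem hx]
    simp only [hpt]
    rw [lintegral_indicator measurableSet_Ioi]
    -- series expansion
    set c : ℕ → ℝ := fun k => Real.exp (-α) * α * β * (α*β)^k /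
      ((Nat.factorial k : ℝ) * (Nat.factorial (k+1) : ℝ)) with hc
    have hc_nonneg : ∀ k, 0 ≤ c k := by
      intro k
      have h1 : (0:ℝ) < (Nat.factorial k : ℝ) := by positivity
      have h2 : (0:ℝ) < (Nat.factorial (k+1) : ℝ) := by positivity
      positivity
    have key : ∀ x ∈ Ioi (0:ℝ), g x * x
        = ∑' k : ℕ, c k * (x ^ (k+1) * Real.exp (-(β * x))) := by
      intro x hx
      have hx' : (0:ℝ) < x := hx
      have ht : (0:ℝ) ≤ α * β * x := by positivity
      have hsq : Real.sqrt (α/(β*x)) * Real.sqrt (α*β*x) = α := by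
        rw [← Real.sqrt_mul (by positivity)]
        rw [show α/(β*x) * (α*β*x) = α^2 by field_simp]
        exact Real.sqrt_sq hα.le
      have hexp : Real.exp (-α - β*x) = Real.exp (-α) * Real.exp (-(β*x)) := by
        rw [← Real.exp_add]; ring_nf
      calc g x * x = (Real.sqrt (α/(β*x)) * Real.sqrt (α*β*x)) *
            (β * (Real.exp (-α) * Real.exp (-(β*x))) *
              (∑' k : ℕ, (α*β*x) ^ k / ((Nat.factorial k : ℝ) * (Nat.factorial (k+1) : ℝ))) * x) := by
            rw [hg]; simp only []
            rw [besselI1_two_sqrt ht, hexp]; ring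
        _ = ∑' k : ℕ, c k * (x ^ (k+1) * Real.exp (-(β * x))) := by
            rw [hsq]
            rw [show ∑' k : ℕ, c k * (x ^ (k+1) * Real.exp (-(β * x)))
              = ∑' k : ℕ, (α * (β * (Real.exp (-α) * Real.exp (-(β*x))) * x)) *
                ((α*β*x) ^ k / ((Nat.factorial k : ℝ) * (Nat.factorial (k+1) : ℝ))) from
              tsum_congr fun k => by rw [hc]; ring]
            rw [tsum_mul_left]
            ring
    have hsummable : ∀ x : ℝ, 0 < x →
        Summable fun k : ℕ => c k * (x ^ (k+1) * Real.exp (-(β * x))) := by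
      intro x hx
      apply Summable.congr ((bessel_summable (α*β*x)).mul_left
        (α * (β * (Real.exp (-α) * Real.exp (-(β*x))) * x)))
      intro k
      rw [hc]; ring
    have step1 : ∫⁻ x in Ioi (0:ℝ), ENNReal.ofReal (g x * x)
        = ∫⁻ x in Ioi (0:ℝ), ∑' k : ℕ,
            ENNReal.ofReal (c k * (x ^ (k+1) * Real.exp (-(β * x)))) := by
      apply setLIntegral_congr_fun measurableSet_Ioi
      intro x hx
      have hx' : (0:ℝ) < x := hx
      dsimp only
      rw [key x hx]
      rw [ENNReal.ofReal_tsum_of_nonneg (fun k => by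
        have := hc_nonneg k; positivity) (hsummable x hx')]
    rw [step1, lintegral_tsum (f := fun (k : ℕ) (x : ℝ) =>
      ENNReal.ofReal (c k * (x ^ (k+1) * Real.exp (-(β * x)))))
      (fun k => (((measurable_id.pow_const (k+1)).mul
      ((measurable_const.mul measurable_id).neg.exp)).const_mul (c k)).ennreal_ofReal.aemeasurable)]
    have step2 : ∀ k : ℕ, ∫⁻ x in Ioi (0:ℝ),
        ENNReal.ofReal (c k * (x ^ (k+1) * Real.exp (-(β * x))))
        = ENNReal.ofReal (c k * ((Nat.factorial (k+1) : ℝ) / β ^ (k+2))) := by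
      intro k
      simp_rw [ENNReal.ofReal_mul (hc_nonneg k)]
      rw [lintegral_const_mul (ENNReal.ofReal (c k))
        (f := fun x : ℝ => ENNReal.ofReal (x ^ (k+1) * Real.exp (-(β * x))))
        ((measurable_id.pow_const (k+1)).mul
        ((measurable_const.mul measurable_id).neg.exp)).ennreal_ofReal]
      rw [gamma_lintegral k hβ]
    simp_rw [step2]
    -- sum the series
    have hterm : ∀ k : ℕ, c k * ((Nat.factorial (k+1) : ℝ) / β ^ (k+2))
        = (Real.exp (-α) * α / β) * (α ^ k / (Nat.factorial k : ℝ)) := by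
      intro k
      have h1 : ((Nat.factorial k : ℝ)) ≠ 0 := by positivity
      have h2 : ((Nat.factorial (k+1) : ℝ)) ≠ 0 := by positivity
      have h3 : β ≠ 0 := hβ.ne'
      rw [hc]
      field_simp
      ring
    have hsum2 : Summable fun k : ℕ => c k * ((Nat.factorial (k+1) : ℝ) / β ^ (k+2)) := by
      apply Summable.congr ((Real.summable_pow_div_factorial α).mul_left
        (Real.exp (-α) * α / β))
      intro k
      rw [hterm k]
    rw [← ENNReal.ofReal_tsum_of_nonneg (fun k => by
      have h1 : (0:ℝ) < (Nat.factorial (k+1) : ℝ) := by positivity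
      have := hc_nonneg k
      positivity) hsum2]
    congr 1
    calc ∑' k : ℕ, c k * ((Nat.factorial (k+1) : ℝ) / β ^ (k+2))
        = ∑' k : ℕ, (Real.exp (-α) * α / β) * (α ^ k / (Nat.factorial k : ℝ)) :=
          tsum_congr fun k => hterm k
      _ = (Real.exp (-α) * α / β) * Real.exp α := by
          rw [tsum_mul_left, sum_pow_div_factorial]
      _ = α / β := by
          rw [Real.exp_neg]
          field_simp
  rw [hL, ENNReal.toReal_ofReal (by positivity)]
end

section
/- For all α, β > 0 and every κ with 0 < κ < 1, one has the integral representation ∫_{[0,∞)} x^κ m_{α,β}(dx) = (αβ/Γ(1−κ)) ∫_0^∞ exp(−αu/(β+u)) u^{−κ} (β+u)^{−2} du, where Γ denotes the Gamma function. -/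
open MeasureTheory Filter Set
open scoped ENNReal

lemma measurable_tsum_real {f : ℕ → ℝ → ℝ} (hf : ∀ n, Measurable (f n))
    (hs : ∀ x, Summable fun n => f n x) : Measurable fun x => ∑' n, f n x := by
  apply measurable_of_tendsto_metrizable
    (f := fun N x => ∑ n ∈ Finset.range N, f n x)
  · exact fun N => Finset.measurable_sum _ fun n _ => hf n
  · rw [tendsto_pi_nhds]
    exact fun x => (hs x).hasSum.tendsto_sum_nat

lemma summable_aux {y : ℝ} (hy : 0 ≤ y) :
    Summable fun k : ℕ => y ^ k / ((k.factorial : ℝ) * ((k + 1).factorial : ℝ)) := by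
  refine Summable.of_nonneg_of_le (fun k => by positivity) (fun k => ?_)
    (Real.summable_pow_div_factorial y)
  exact div_le_div_of_nonneg_left (by positivity) (by positivity)
    (le_mul_of_one_le_right (by positivity) (by exact_mod_cast (k + 1).factorial_pos))

lemma lintegral_rpow_exp {a r : ℝ} (ha : 0 < a) (hr : 0 < r) :
    ∫⁻ t in Set.Ioi (0 : ℝ), ENNReal.ofReal (t ^ (a - 1) * Real.exp (-(r * t))) =
      ENNReal.ofReal ((1 / r) ^ a * Real.Gamma a) := by
  rw [← Real.integral_rpow_mul_exp_neg_mul_Ioi ha hr]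
  have hint : IntegrableOn (fun t : ℝ => t ^ (a - 1) * Real.exp (-(r * t))) (Ioi 0) := by
    have := integrableOn_rpow_mul_exp_neg_mul_rpow (s := a - 1) (p := 1) (b := r)
      (by linarith) zero_lt_one hr
    simpa [Real.rpow_one, neg_mul] using this
  exact (MeasureTheory.ofReal_integral_eq_lintegral_ofReal hint
    ((ae_restrict_iff' measurableSet_Ioi).2
      (Filter.Eventually.of_forall fun x hx => by
        have hx' : (0:ℝ) < x := hx
        positivity))).symm



lemma lintegral_beta {β κ : ℝ} (hβ : 0 < β) (hκ0 : 0 < κ) (hκ1 : κ < 1) (n : ℕ) :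
    ∫⁻ u in Set.Ioi (0 : ℝ), ENNReal.ofReal (u ^ (-κ) * (β + u) ^ (-((n : ℝ) + 2))) =
      ENNReal.ofReal (Real.Gamma (1 - κ) * ((1 / β) ^ (κ + n + 1) * Real.Gamma (κ + n + 1)) /
        ((n + 1).factorial : ℝ)) := by
  have hfac : (0 : ℝ) < ((n + 1).factorial : ℝ) := by exact_mod_cast (n + 1).factorial_pos
  have h1κ : (0 : ℝ) < 1 - κ := by linarith
  set F : ℝ → ℝ → ℝ≥0∞ := fun u t =>
    ENNReal.ofReal (u ^ (-κ)) * ENNReal.ofReal (t ^ ((n : ℝ) + 1) * Real.exp (-((β + u) * t)))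
    with hF
  have key : (∫⁻ u in Set.Ioi (0 : ℝ), ENNReal.ofReal (u ^ (-κ) * (β + u) ^ (-((n : ℝ) + 2)))) *
      ENNReal.ofReal ((n + 1).factorial : ℝ) =
      ENNReal.ofReal (Real.Gamma (1 - κ) * ((1 / β) ^ (κ + n + 1) * Real.Gamma (κ + n + 1))) := by
    rw [← lintegral_mul_const' _ _ ENNReal.ofReal_ne_top]
    calc
      ∫⁻ u in Set.Ioi (0 : ℝ), ENNReal.ofReal (u ^ (-κ) * (β + u) ^ (-((n : ℝ) + 2))) *
          ENNReal.ofReal ((n + 1).factorial : ℝ)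
          = ∫⁻ u in Set.Ioi (0 : ℝ), ∫⁻ t in Set.Ioi (0 : ℝ), F u t := by
        apply setLIntegral_congr_fun measurableSet_Ioi
        intro u hu
        beta_reduce
        have hu' : (0 : ℝ) < u := hu
        have hbu : (0 : ℝ) < β + u := by linarith
        have inner : ∫⁻ t in Set.Ioi (0 : ℝ), F u t =
            ENNReal.ofReal (u ^ (-κ)) *
              ENNReal.ofReal ((1 / (β + u)) ^ ((n : ℝ) + 2) * Real.Gamma ((n : ℝ) + 2)) := by
          simp only [hF]
          rw [lintegral_const_mul' _ _ ENNReal.ofReal_ne_top]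
          congr 1
          have := lintegral_rpow_exp (a := (n : ℝ) + 2) (r := β + u) (by positivity) hbu
          rw [show (n : ℝ) + 2 - 1 = (n : ℝ) + 1 by ring] at this
          exact this
        rw [inner, ← ENNReal.ofReal_mul (by positivity : (0:ℝ) ≤ u ^ (-κ) * (β + u) ^ (-((n : ℝ) + 2))),
          ← ENNReal.ofReal_mul (by positivity : (0:ℝ) ≤ u ^ (-κ))]
        congr 1
        have hΓ : Real.Gamma ((n : ℝ) + 2) = ((n + 1).factorial : ℝ) := by
          have := Real.Gamma_nat_eq_factorial (n + 1)
          push_cast at this ⊢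
          rw [← this]; ring_nf
        rw [hΓ]
        rw [one_div, Real.inv_rpow hbu.le, ← Real.rpow_neg hbu.le]
        ring
      _ = ∫⁻ t in Set.Ioi (0 : ℝ), ∫⁻ u in Set.Ioi (0 : ℝ), F u t := by
        apply lintegral_lintegral_swap
        apply Measurable.aemeasurable
        change Measurable (fun p : ℝ × ℝ => ENNReal.ofReal (p.1 ^ (-κ)) *
          ENNReal.ofReal (p.2 ^ ((n : ℝ) + 1) * Real.exp (-((β + p.1) * p.2))))
        apply Measurable.mul (f := fun p : ℝ × ℝ => ENNReal.ofReal (p.1 ^ (-κ)))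
          (g := fun p : ℝ × ℝ => ENNReal.ofReal (p.2 ^ ((n : ℝ) + 1) * Real.exp (-((β + p.1) * p.2))))
        · exact ENNReal.measurable_ofReal.comp (measurable_fst.pow_const _)
        · refine ENNReal.measurable_ofReal.comp ?_
          exact (measurable_snd.pow_const _).mul
            (((measurable_const.add measurable_fst).mul measurable_snd).neg.exp)
      _ = ∫⁻ t in Set.Ioi (0 : ℝ), ENNReal.ofReal (Real.Gamma (1 - κ)) *
            ENNReal.ofReal (t ^ (κ + n + 1 - 1) * Real.exp (-(β * t))) := by
        apply setLIntegral_congr_fun measurableSet_Ioi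
        intro t ht
        have ht' : (0 : ℝ) < t := ht
        have step1 : ∀ u ∈ Set.Ioi (0 : ℝ), F u t =
            ENNReal.ofReal (t ^ ((n : ℝ) + 1) * Real.exp (-(β * t))) *
              ENNReal.ofReal (u ^ (1 - κ - 1) * Real.exp (-(t * u))) := by
          intro u hu
          have hu' : (0 : ℝ) < u := hu
          simp only [hF]
          rw [← ENNReal.ofReal_mul (by positivity), ← ENNReal.ofReal_mul (by positivity)]
          congr 1
          rw [show 1 - κ - 1 = -κ by ring,
            show -((β + u) * t) = -(β * t) + -(t * u) by ring, Real.exp_add]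
          ring
        calc
          ∫⁻ u in Set.Ioi (0 : ℝ), F u t
              = ∫⁻ u in Set.Ioi (0 : ℝ), ENNReal.ofReal (t ^ ((n : ℝ) + 1) * Real.exp (-(β * t))) *
                ENNReal.ofReal (u ^ (1 - κ - 1) * Real.exp (-(t * u))) :=
            setLIntegral_congr_fun measurableSet_Ioi
              step1
          _ = ENNReal.ofReal (t ^ ((n : ℝ) + 1) * Real.exp (-(β * t))) *
                ENNReal.ofReal ((1 / t) ^ (1 - κ) * Real.Gamma (1 - κ)) := by
            rw [lintegral_const_mul' _ _ ENNReal.ofReal_ne_top,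
              lintegral_rpow_exp h1κ ht']
          _ = ENNReal.ofReal (Real.Gamma (1 - κ)) *
                ENNReal.ofReal (t ^ (κ + n + 1 - 1) * Real.exp (-(β * t))) := by
            rw [← ENNReal.ofReal_mul (by positivity), ← ENNReal.ofReal_mul
              (Real.Gamma_nonneg_of_nonneg h1κ.le)]
            congr 1
            have hsplit : t ^ (κ + (n : ℝ) + 1 - 1) = t ^ ((n : ℝ) + 1) * t ^ (-(1 - κ)) := by
              rw [← Real.rpow_add ht']; ring_nf
            rw [hsplit, one_div, Real.inv_rpow ht'.le, ← Real.rpow_neg ht'.le]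
            ring
      _ = ENNReal.ofReal (Real.Gamma (1 - κ)) *
            ENNReal.ofReal ((1 / β) ^ (κ + n + 1) * Real.Gamma (κ + n + 1)) := by
        rw [lintegral_const_mul' _ _ ENNReal.ofReal_ne_top,
          lintegral_rpow_exp (by positivity) hβ]
      _ = ENNReal.ofReal (Real.Gamma (1 - κ) * ((1 / β) ^ (κ + n + 1) * Real.Gamma (κ + n + 1))) := by
        rw [← ENNReal.ofReal_mul (Real.Gamma_nonneg_of_nonneg h1κ.le)]
  rw [ENNReal.ofReal_div_of_pos hfac, ENNReal.eq_div_iff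
    (ne_of_gt (ENNReal.ofReal_pos.2 hfac)) ENNReal.ofReal_ne_top, mul_comm]
  exact key



section main
variable {α β κ : ℝ}

/-- Termwise pointwise expansion of the Bessel density times `x ^ κ`. -/
lemma T1_pointwise (hα : 0 < α) (hβ : 0 < β) (hκ0 : 0 < κ) {x : ℝ} (hx : 0 < x) :
    ENNReal.ofReal (x ^ κ * (β * Real.exp (-α - β * x) * Real.sqrt (α / (β * x)) *
        besselI1 (2 * Real.sqrt (α * β * x)))) =
      ∑' k : ℕ, ENNReal.ofReal ((Real.exp (-α) * α * β * (α * β) ^ k /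
          ((k.factorial : ℝ) * ((k + 1).factorial : ℝ))) * (x ^ (κ + k) * Real.exp (-(β * x)))) := by
  have h1 : Real.sqrt (α / (β * x)) * Real.sqrt (α * β * x) = α := by
    rw [← Real.sqrt_mul (by positivity), show α / (β * x) * (α * β * x) = α ^ 2 by
      field_simp]
    exact Real.sqrt_sq hα.le
  have hI : besselI1 (2 * Real.sqrt (α * β * x)) =
      Real.sqrt (α * β * x) * ∑' k : ℕ, (α * β * x) ^ k /
        ((k.factorial : ℝ) * ((k + 1).factorial : ℝ)) := by
    unfold besselI1
    rw [show (2 * Real.sqrt (α * β * x)) ^ 2 / 4 = α * β * x by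
      rw [mul_pow, Real.sq_sqrt (by positivity)]; ring]
    ring
  have hre : x ^ κ * (β * Real.exp (-α - β * x) * Real.sqrt (α / (β * x)) *
      besselI1 (2 * Real.sqrt (α * β * x))) =
      ∑' k : ℕ, (Real.exp (-α) * α * β * (α * β) ^ k /
          ((k.factorial : ℝ) * ((k + 1).factorial : ℝ))) * (x ^ (κ + k) * Real.exp (-(β * x))) := by
    rw [hI, show x ^ κ * (β * Real.exp (-α - β * x) * Real.sqrt (α / (β * x)) *
        (Real.sqrt (α * β * x) * ∑' k : ℕ, (α * β * x) ^ k /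
          ((k.factorial : ℝ) * ((k + 1).factorial : ℝ)))) =
        Real.sqrt (α / (β * x)) * Real.sqrt (α * β * x) * (x ^ κ * β * Real.exp (-α - β * x)) *
          ∑' k : ℕ, (α * β * x) ^ k / ((k.factorial : ℝ) * ((k + 1).factorial : ℝ)) by ring,
      h1, ← tsum_mul_left]
    refine tsum_congr fun k => ?_
    rw [show -α - β * x = -α + -(β * x) by ring, Real.exp_add,
      show κ + (k : ℝ) = κ + (k : ℕ) from rfl,
      Real.rpow_add hx, Real.rpow_natCast, mul_pow]
    ring
  rw [hre]
  refine ENNReal.ofReal_tsum_of_nonneg (fun k => by positivity) ?_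
  refine ((summable_aux (y := α * β * x) (by positivity)).mul_left
    (Real.exp (-α) * α * β * (x ^ κ * Real.exp (-(β * x))))).congr fun k => ?_
  rw [Real.rpow_add hx, Real.rpow_natCast, mul_pow]
  ring

/-- Termwise pointwise expansion of the RHS integrand. -/
lemma T2_pointwise (hα : 0 < α) (hβ : 0 < β) (hκ0 : 0 < κ) {u : ℝ} (hu : 0 < u) :
    ENNReal.ofReal (Real.exp (-α * u / (β + u)) * u ^ (-κ) / (β + u) ^ 2) =
      ∑' n : ℕ, ENNReal.ofReal ((Real.exp (-α) * (α * β) ^ n / (n.factorial : ℝ)) *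
        (u ^ (-κ) * (β + u) ^ (-((n : ℝ) + 2)))) := by
  have hbu : (0 : ℝ) < β + u := by positivity
  have hpow : ∀ n : ℕ, (β + u) ^ (-((n : ℝ) + 2)) = ((β + u) ^ (n + 2) : ℝ)⁻¹ := by
    intro n
    rw [show -((n : ℝ) + 2) = -(((n + 2 : ℕ) : ℝ)) by push_cast; ring,
      Real.rpow_neg hbu.le, Real.rpow_natCast]
  have hre : Real.exp (-α * u / (β + u)) * u ^ (-κ) / (β + u) ^ 2 =
      ∑' n : ℕ, (Real.exp (-α) * (α * β) ^ n / (n.factorial : ℝ)) *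
        (u ^ (-κ) * (β + u) ^ (-((n : ℝ) + 2))) := by
    have he : Real.exp (-α * u / (β + u)) = Real.exp (-α) * Real.exp (α * β / (β + u)) := by
      rw [← Real.exp_add]
      congr 1
      field_simp
      ring
    have hexp : Real.exp (α * β / (β + u)) = ∑' n : ℕ, (α * β / (β + u)) ^ n / (n.factorial : ℝ) := by
      rw [Real.exp_eq_exp_ℝ, NormedSpace.exp_eq_tsum_div]
    rw [he, hexp, show Real.exp (-α) * (∑' n : ℕ, (α * β / (β + u)) ^ n / (n.factorial : ℝ)) *
        u ^ (-κ) / (β + u) ^ 2 =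
        (Real.exp (-α) * u ^ (-κ) / (β + u) ^ 2) *
          ∑' n : ℕ, (α * β / (β + u)) ^ n / (n.factorial : ℝ) by ring, ← tsum_mul_left]
    refine tsum_congr fun n => ?_
    rw [hpow n, div_pow]
    rw [pow_add]
    field_simp
  rw [hre]
  refine ENNReal.ofReal_tsum_of_nonneg (fun n => ?_) ?_
  · have h1 : (0:ℝ) ≤ (β + u) ^ (-((n : ℝ) + 2)) := Real.rpow_nonneg hbu.le _
    positivity
  refine ((Real.summable_pow_div_factorial (α * β / (β + u))).mul_left
    (Real.exp (-α) * (u ^ (-κ) / (β + u) ^ 2))).congr fun n => ?_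
  rw [hpow n, div_pow, pow_add]
  field_simp

end main



section main
variable {α β κ : ℝ}

lemma key_identity (hα : 0 < α) (hβ : 0 < β) (hκ0 : 0 < κ) (hκ1 : κ < 1) :
    (∫⁻ x in Set.Ioi (0 : ℝ), ENNReal.ofReal (x ^ κ *
        (β * Real.exp (-α - β * x) * Real.sqrt (α / (β * x)) *
          besselI1 (2 * Real.sqrt (α * β * x))))) =
      ENNReal.ofReal (α * β / Real.Gamma (1 - κ)) *
        ∫⁻ u in Set.Ioi (0 : ℝ),
          ENNReal.ofReal (Real.exp (-α * u / (β + u)) * u ^ (-κ) / (β + u) ^ 2) := by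
  have hΓ : (0 : ℝ) < Real.Gamma (1 - κ) := Real.Gamma_pos_of_pos (by linarith)
  -- LHS as a series
  have hT1 : (∫⁻ x in Set.Ioi (0 : ℝ), ENNReal.ofReal (x ^ κ *
        (β * Real.exp (-α - β * x) * Real.sqrt (α / (β * x)) *
          besselI1 (2 * Real.sqrt (α * β * x))))) =
      ∑' k : ℕ, ENNReal.ofReal ((Real.exp (-α) * α * β * (α * β) ^ k /
          ((k.factorial : ℝ) * ((k + 1).factorial : ℝ))) *
        ((1 / β) ^ (κ + k + 1) * Real.Gamma (κ + k + 1))) := by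
    rw [setLIntegral_congr_fun measurableSet_Ioi (
      fun ⦃x⦄ (hx : (0:ℝ) < x) => T1_pointwise hα hβ hκ0 hx)]
    rw [lintegral_tsum (f := fun (k : ℕ) (x : ℝ) => ENNReal.ofReal ((Real.exp (-α) * α * β * (α * β) ^ k /
      ((k.factorial : ℝ) * ((k + 1).factorial : ℝ))) * (x ^ (κ + k) * Real.exp (-(β * x)))))
      fun k => (ENNReal.measurable_ofReal.comp (measurable_const.mul
      ((measurable_id.pow_const (κ + (k:ℝ))).mul
        ((measurable_const.mul measurable_id).neg.exp)))).aemeasurable]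
    refine tsum_congr fun k => ?_
    have hd : (0:ℝ) ≤ Real.exp (-α) * α * β * (α * β) ^ k /
        ((k.factorial : ℝ) * ((k + 1).factorial : ℝ)) := by positivity
    calc
      ∫⁻ x in Set.Ioi (0 : ℝ), ENNReal.ofReal ((Real.exp (-α) * α * β * (α * β) ^ k /
          ((k.factorial : ℝ) * ((k + 1).factorial : ℝ))) * (x ^ (κ + k) * Real.exp (-(β * x))))
          = ENNReal.ofReal (Real.exp (-α) * α * β * (α * β) ^ k /
              ((k.factorial : ℝ) * ((k + 1).factorial : ℝ))) *
            ∫⁻ x in Set.Ioi (0 : ℝ), ENNReal.ofReal (x ^ (κ + k + 1 - 1) * Real.exp (-(β * x))) := by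
        rw [← lintegral_const_mul' _ _ ENNReal.ofReal_ne_top]
        refine setLIntegral_congr_fun measurableSet_Ioi (
          fun ⦃x⦄ (hx : (0:ℝ) < x) => ?_)
        rw [← ENNReal.ofReal_mul hd, show κ + (k:ℝ) + 1 - 1 = κ + k by ring]
      _ = ENNReal.ofReal ((Real.exp (-α) * α * β * (α * β) ^ k /
            ((k.factorial : ℝ) * ((k + 1).factorial : ℝ))) *
          ((1 / β) ^ (κ + k + 1) * Real.Gamma (κ + k + 1))) := by
        rw [lintegral_rpow_exp (by positivity) hβ, ← ENNReal.ofReal_mul hd]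
  -- RHS as a series
  have hT2 : (∫⁻ u in Set.Ioi (0 : ℝ),
        ENNReal.ofReal (Real.exp (-α * u / (β + u)) * u ^ (-κ) / (β + u) ^ 2)) =
      ∑' n : ℕ, ENNReal.ofReal ((Real.exp (-α) * (α * β) ^ n / (n.factorial : ℝ)) *
        (Real.Gamma (1 - κ) * ((1 / β) ^ (κ + n + 1) * Real.Gamma (κ + n + 1)) /
          ((n + 1).factorial : ℝ))) := by
    rw [setLIntegral_congr_fun measurableSet_Ioi (
      fun ⦃u⦄ (hu : (0:ℝ) < u) => T2_pointwise hα hβ hκ0 hu)]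
    rw [lintegral_tsum (f := fun (n : ℕ) (u : ℝ) => ENNReal.ofReal ((Real.exp (-α) * (α * β) ^ n / (n.factorial : ℝ)) *
      (u ^ (-κ) * (β + u) ^ (-((n : ℝ) + 2)))))
      fun n => (ENNReal.measurable_ofReal.comp (measurable_const.mul
      ((measurable_id.pow_const (-κ)).mul
        ((measurable_const.add measurable_id).pow_const (-((n:ℝ) + 2)))))).aemeasurable]
    refine tsum_congr fun n => ?_
    have hq : (0:ℝ) ≤ Real.exp (-α) * (α * β) ^ n / (n.factorial : ℝ) := by positivity
    calc
      ∫⁻ u in Set.Ioi (0 : ℝ), ENNReal.ofReal ((Real.exp (-α) * (α * β) ^ n / (n.factorial : ℝ)) *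
          (u ^ (-κ) * (β + u) ^ (-((n : ℝ) + 2))))
          = ENNReal.ofReal (Real.exp (-α) * (α * β) ^ n / (n.factorial : ℝ)) *
            ∫⁻ u in Set.Ioi (0 : ℝ), ENNReal.ofReal (u ^ (-κ) * (β + u) ^ (-((n : ℝ) + 2))) := by
        rw [← lintegral_const_mul' _ _ ENNReal.ofReal_ne_top]
        refine setLIntegral_congr_fun measurableSet_Ioi (
          fun ⦃u⦄ (hu : (0:ℝ) < u) => ?_)
        rw [← ENNReal.ofReal_mul hq]
      _ = ENNReal.ofReal ((Real.exp (-α) * (α * β) ^ n / (n.factorial : ℝ)) *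
          (Real.Gamma (1 - κ) * ((1 / β) ^ (κ + n + 1) * Real.Gamma (κ + n + 1)) /
            ((n + 1).factorial : ℝ))) := by
        rw [lintegral_beta hβ hκ0 hκ1 n, ← ENNReal.ofReal_mul hq]
  rw [hT1, hT2, ← ENNReal.tsum_mul_left]
  refine tsum_congr fun k => ?_
  rw [← ENNReal.ofReal_mul (by positivity)]
  congr 1
  have hk : (0:ℝ) < (k.factorial : ℝ) := by exact_mod_cast k.factorial_pos
  have hk1 : (0:ℝ) < ((k + 1).factorial : ℝ) := by exact_mod_cast (k + 1).factorial_pos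
  field_simp

end main



theorem bessel_fractional_moment_repr (α β κ : ℝ) (hα : 0 < α) (hβ : 0 < β)
    (hκ0 : 0 < κ) (hκ1 : κ < 1) :
    ∫ x, x ^ κ ∂ besselMeasure α β =
      α * β / Real.Gamma (1 - κ) *
        ∫ u in Set.Ioi (0 : ℝ), Real.exp (-α * u / (β + u)) * u ^ (-κ) / (β + u) ^ 2 := by
  have hΓ : (0 : ℝ) < Real.Gamma (1 - κ) := Real.Gamma_pos_of_pos (by linarith)
  have hFmeas : Measurable (fun x : ℝ => β * Real.exp (-α - β * x) * Real.sqrt (α / (β * x)) *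
      besselI1 (2 * Real.sqrt (α * β * x))) :=
    ((measurable_const.mul ((measurable_const.sub
        (measurable_const.mul measurable_id)).exp)).mul
      ((measurable_const.div (measurable_const.mul measurable_id)).sqrt)).mul
      (measurable_besselI1.comp (measurable_const.mul
        ((measurable_const.mul measurable_id).sqrt)))
  have hdens : Measurable fun x : ℝ => ENNReal.ofReal ((Set.Ioi (0:ℝ)).indicator
      (fun x => β * Real.exp (-α - β * x) * Real.sqrt (α / (β * x)) *
        besselI1 (2 * Real.sqrt (α * β * x))) x) :=
    (hFmeas.indicator measurableSet_Ioi).ennreal_ofReal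
  have hIio : besselMeasure α β (Set.Iio 0) = 0 := by
    unfold besselMeasure
    rw [Measure.add_apply, Measure.smul_apply, Measure.dirac_apply,
      Set.indicator_of_notMem (by simp : (0:ℝ) ∉ Set.Iio (0:ℝ)),
      withDensity_apply _ measurableSet_Iio]
    have h0 : ∫⁻ x in Set.Iio (0:ℝ),
        ENNReal.ofReal ((Set.Ioi (0:ℝ)).indicator
          (fun x => β * Real.exp (-α - β * x) * Real.sqrt (α / (β * x)) *
            besselI1 (2 * Real.sqrt (α * β * x))) x) = 0 := by
      rw [setLIntegral_congr_fun measurableSet_Iio (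
        fun ⦃x⦄ (hx : x < 0) => ?_), lintegral_zero]
      rw [Set.indicator_of_notMem (by simp [not_lt, hx.le] : x ∉ Set.Ioi (0:ℝ)),
        ENNReal.ofReal_zero]
    rw [h0]
    simp
  have hnn : 0 ≤ᵐ[besselMeasure α β] fun x : ℝ => x ^ κ := by
    rw [Filter.EventuallyLE, ae_iff]
    refine measure_mono_null (fun x hx => ?_) hIio
    simp only [Pi.zero_apply, Set.mem_setOf_eq, not_le] at hx
    by_contra hx'
    simp only [Set.mem_Iio, not_lt] at hx'
    exact absurd (Real.rpow_nonneg hx' κ) (not_le.mpr hx)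
  have hgm : Measurable fun a : ℝ => ENNReal.ofReal (a ^ κ) :=
    Measurable.ennreal_ofReal (by exact measurable_id.pow_const κ)
  rw [integral_eq_lintegral_of_nonneg_ae hnn
    ((measurable_id.pow_const κ).aestronglyMeasurable)]
  have hL : ∫⁻ x, ENNReal.ofReal (x ^ κ) ∂besselMeasure α β =
      ∫⁻ x in Set.Ioi (0:ℝ), ENNReal.ofReal (x ^ κ *
        (β * Real.exp (-α - β * x) * Real.sqrt (α / (β * x)) *
          besselI1 (2 * Real.sqrt (α * β * x)))) := by
    unfold besselMeasure
    rw [lintegral_add_measure, lintegral_smul_measure, lintegral_dirac,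
      Real.zero_rpow hκ0.ne', ENNReal.ofReal_zero, smul_zero, zero_add,
      lintegral_withDensity_eq_lintegral_mul _ hdens hgm]
    simp only [Pi.mul_apply]
    have hpt : ∀ x : ℝ, ENNReal.ofReal ((Set.Ioi (0:ℝ)).indicator
        (fun x => β * Real.exp (-α - β * x) * Real.sqrt (α / (β * x)) *
          besselI1 (2 * Real.sqrt (α * β * x))) x) * ENNReal.ofReal (x ^ κ)
        = (Set.Ioi (0:ℝ)).indicator (fun x => ENNReal.ofReal (x ^ κ *
            (β * Real.exp (-α - β * x) * Real.sqrt (α / (β * x)) *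
              besselI1 (2 * Real.sqrt (α * β * x))))) x := by
      intro x
      by_cases hx : x ∈ Set.Ioi (0:ℝ)
      · have hx' : (0:ℝ) < x := hx
        rw [Set.indicator_of_mem hx, Set.indicator_of_mem hx,
          ENNReal.ofReal_mul (Real.rpow_nonneg hx'.le κ), mul_comm]
      · rw [Set.indicator_of_notMem hx, Set.indicator_of_notMem hx,
          ENNReal.ofReal_zero, zero_mul]
    rw [lintegral_congr hpt, lintegral_indicator measurableSet_Ioi]
  rw [hL, key_identity hα hβ hκ0 hκ1]
  have hR : ∫ u in Set.Ioi (0:ℝ), Real.exp (-α * u / (β + u)) * u ^ (-κ) / (β + u) ^ 2 =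
      (∫⁻ u in Set.Ioi (0:ℝ),
        ENNReal.ofReal (Real.exp (-α * u / (β + u)) * u ^ (-κ) / (β + u) ^ 2)).toReal := by
    rw [integral_eq_lintegral_of_nonneg_ae]
    · exact (ae_restrict_iff' measurableSet_Ioi).2 (Filter.Eventually.of_forall
        fun u (hu : (0:ℝ) < u) => by positivity)
    · exact ((((measurable_const.mul measurable_id).div
        (measurable_const.add measurable_id)).exp.mul
        (measurable_id.pow_const (-κ))).div
        ((measurable_const.add measurable_id).pow_const 2)).aestronglyMeasurable
  rw [hR, ENNReal.toReal_mul, ENNReal.toReal_ofReal (by positivity)]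
end
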